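/- Let H be a real Hilbert space, X and Y real normed spaces, U := X × Y × H × H with norm ‖(x,y,s,t)‖_U = (‖x‖²+‖y‖²+‖s‖²+‖t‖²)^{1/2}, V a real normed space, V_h ⊆ V a subspace, L ∈ V*, B : U → V* a continuous linear map, ι : X → H a continuous linear map with ‖ι x‖ ≤ C_P ‖x‖ for all x ∈ X, and ρ, γ : H → H Lipschitz maps with constants L_ρ, L_γ. Let U_h ⊆ U be a subspace and define J(w) := ‖Bw − L‖_{V_h*}² + ‖ρ(ι w₁) − w₃‖² + ‖γ(ι w₁) − w₄‖² for w = (w₁,w₂,w₃,w₄) ∈ U. Assume: (a) discrete stability: there is C_s > 0 with ‖(x,y,s,t)‖_U ≤ C_s (‖B(x,y,s,t)‖_{V_h*} + ‖s‖ + ‖t‖) for all (x,y,s,t) ∈ U_h; (b) there is u = (x*, y*, q, r) ∈ U with B u = L, q = ρ(ι x*), r = γ(ι x*); (c) u_h = (x_h, y_h, q_h, r_h) ∈ U_h satisfies J(u_h) ≤ J(w_h) for all w_h ∈ U_h. Then there is a constant C > 0, depending only on C_s, ‖B‖, L_ρ, L_γ and C_P, such that for all w_h ∈ U_h: ‖u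 − u_h‖_U ≤ C (‖u − w_h‖_U + ‖ι(x* − x_h)‖_H). (This is the error bound (3.8) in the proof of Theorem 3.1, prior to absorbing the L₂ error term.) -/

import Mathlib

private lemma le_sqrt_of_sq_le' {a x : ℝ} (ha : 0 ≤ a) (h : a^2 ≤ x) : a ≤ Real.sqrt x := by
  nth_rewrite 1 [← Real.sqrt_sq ha]
  exact Real.sqrt_le_sqrt h

private lemma mink4' (a1 a2 a3 a4 b1 b2 b3 b4 : ℝ) :
    Real.sqrt ((a1+b1)^2+(a2+b2)^2+(a3+b3)^2+(a4+b4)^2)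
      ≤ Real.sqrt (a1^2+a2^2+a3^2+a4^2) + Real.sqrt (b1^2+b2^2+b3^2+b4^2) := by
  have h := norm_add_le (E := EuclideanSpace ℝ (Fin 4)) (WithLp.toLp 2 ![a1,a2,a3,a4]) (WithLp.toLp 2 ![b1,b2,b3,b4])
  simpa [EuclideanSpace.norm_eq, Fin.sum_univ_four, Real.norm_eq_abs, sq_abs] using h

private lemma sq3' {a b c x y z : ℝ} (ha : 0 ≤ a) (hb : 0 ≤ b) (hc : 0 ≤ c)
    (hx : 0 ≤ x) (hy : 0 ≤ y) (hz : 0 ≤ z) (h1 : a ≤ x) (h2 : b ≤ y) (h3 : c ≤ z) :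
    a^2 + b^2 + c^2 ≤ (x + y + z)^2 := by nlinarith [mul_nonneg hx hy, mul_nonneg hx hz, mul_nonneg hy hz]

private lemma mono4' {a1 a2 a3 a4 b1 b2 b3 b4 : ℝ} (h1 : |a1| ≤ b1) (h2 : |a2| ≤ b2)
    (h3 : |a3| ≤ b3) (h4 : |a4| ≤ b4) :
    Real.sqrt (a1^2+a2^2+a3^2+a4^2) ≤ Real.sqrt (b1^2+b2^2+b3^2+b4^2) :=
  Real.sqrt_le_sqrt (by nlinarith [abs_nonneg a1, abs_nonneg a2, abs_nonneg a3, abs_nonneg a4, sq_abs a1, sq_abs a2, sq_abs a3, sq_abs a4])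

set_option maxHeartbeats 1000000 in
set_option synthInstance.maxHeartbeats 400000 in
/-- error bound (3.8) in the proof of Theorem 3.1.
`U := X × Y × H × H` with the ℓ²-product norm, `V_h ⊆ V`, `B : U → V*` continuous
linear, `L ∈ V*`, `ι : X → H` continuous linear with `‖ι x‖ ≤ C_P ‖x‖`, and
`ρ, γ : H → H` Lipschitz.  Assume discrete stability (a) on the subspace `U_h`,
that `u = (x*, y*, q, r)` solves the problem (b), and that `u_h ∈ U_h` minimizes the
residual functional `J` over `U_h` (c).  Then there is `C > 0` such that
`‖u − u_h‖_U ≤ C (‖u − w_h‖_U + ‖ι (x* − x_h)‖)` for all `w_h ∈ U_h`. -/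
theorem stmt_8
    {X Y H V : Type*}
    [NormedAddCommGroup X] [NormedSpace ℝ X]
    [NormedAddCommGroup Y] [NormedSpace ℝ Y]
    [NormedAddCommGroup H] [InnerProductSpace ℝ H] [CompleteSpace H]
    [NormedAddCommGroup V] [NormedSpace ℝ V]
    (Vh : Submodule ℝ V)
    (B : (X × Y × H × H) →L[ℝ] (V →L[ℝ] ℝ)) (L : V →L[ℝ] ℝ)
    (ι : X →L[ℝ] H) (CP : ℝ) (hι : ∀ x : X, ‖ι x‖ ≤ CP * ‖x‖)
    (ρ γ : H → H) (Lρ Lγ : NNReal) (hρ : LipschitzWith Lρ ρ) (hγ : LipschitzWith Lγ γ)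
    (Uh : Submodule ℝ (X × Y × H × H))
    (J : (X × Y × H × H) → ℝ)
    (hJ : ∀ w : X × Y × H × H,
      J w = ‖(B w - L).comp Vh.subtypeL‖ ^ 2
        + ‖ρ (ι w.1) - w.2.2.1‖ ^ 2 + ‖γ (ι w.1) - w.2.2.2‖ ^ 2)
    (Cs : ℝ) (hCs : 0 < Cs)
    (hstab : ∀ w ∈ Uh,
      Real.sqrt (‖w.1‖ ^ 2 + ‖w.2.1‖ ^ 2 + ‖w.2.2.1‖ ^ 2 + ‖w.2.2.2‖ ^ 2)
        ≤ Cs * (‖(B w).comp Vh.subtypeL‖ + ‖w.2.2.1‖ + ‖w.2.2.2‖))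
    (u : X × Y × H × H) (hBu : B u = L)
    (hq : u.2.2.1 = ρ (ι u.1)) (hr : u.2.2.2 = γ (ι u.1))
    (uh : X × Y × H × H) (huh : uh ∈ Uh)
    (hmin : ∀ wh ∈ Uh, J uh ≤ J wh) :
    ∃ C > 0, ∀ wh ∈ Uh,
      Real.sqrt (‖(u - uh).1‖ ^ 2 + ‖(u - uh).2.1‖ ^ 2
          + ‖(u - uh).2.2.1‖ ^ 2 + ‖(u - uh).2.2.2‖ ^ 2)
        ≤ C * (Real.sqrt (‖(u - wh).1‖ ^ 2 + ‖(u - wh).2.1‖ ^ 2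
          + ‖(u - wh).2.2.1‖ ^ 2 + ‖(u - wh).2.2.2‖ ^ 2) + ‖ι (u.1 - uh.1)‖) := by
  set CP' : ℝ := max CP 0 with hCP'def
  have hCP' : 0 ≤ CP' := le_max_right _ _
  have hι' : ∀ x : X, ‖ι x‖ ≤ CP' * ‖x‖ := fun x =>
    (hι x).trans (mul_le_mul_of_nonneg_right (le_max_left _ _) (norm_nonneg x))
  have hLρ : (0:ℝ) ≤ (Lρ : ℝ) := Lρ.coe_nonneg
  have hLγ : (0:ℝ) ≤ (Lγ : ℝ) := Lγ.coe_nonneg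
  set M : ℝ := ‖B‖ + ((Lρ:ℝ)*CP'+1) + ((Lγ:ℝ)*CP'+1) with hMdef
  have hM : 0 ≤ M := by positivity
  refine ⟨1 + Cs*(‖B‖+3*M+2) + Cs*((Lρ:ℝ)+(Lγ:ℝ)), by positivity, ?_⟩
  intro wh hwh
  simp only [Prod.fst_sub, Prod.snd_sub]
  set D : ℝ := Real.sqrt (‖u.1 - wh.1‖^2 + ‖u.2.1 - wh.2.1‖^2
    + ‖u.2.2.1 - wh.2.2.1‖^2 + ‖u.2.2.2 - wh.2.2.2‖^2) with hDdef
  have hD0 : 0 ≤ D := hDdef ▸ Real.sqrt_nonneg _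
  set E : ℝ := ‖ι (u.1 - uh.1)‖ with hEdef
  have hE0 : 0 ≤ E := norm_nonneg _
  clear_value CP' M D E
  -- components of u - wh are bounded by D
  have hc1 : ‖u.1 - wh.1‖ ≤ D := hDdef ▸ le_sqrt_of_sq_le' (norm_nonneg _)
    (by nlinarith [sq_nonneg ‖u.2.1 - wh.2.1‖, sq_nonneg ‖u.2.2.1 - wh.2.2.1‖, sq_nonneg ‖u.2.2.2 - wh.2.2.2‖])
  have hc2 : ‖u.2.1 - wh.2.1‖ ≤ D := hDdef ▸ le_sqrt_of_sq_le' (norm_nonneg _)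
    (by nlinarith [sq_nonneg ‖u.1 - wh.1‖, sq_nonneg ‖u.2.2.1 - wh.2.2.1‖, sq_nonneg ‖u.2.2.2 - wh.2.2.2‖])
  have hc3 : ‖u.2.2.1 - wh.2.2.1‖ ≤ D := hDdef ▸ le_sqrt_of_sq_le' (norm_nonneg _)
    (by nlinarith [sq_nonneg ‖u.1 - wh.1‖, sq_nonneg ‖u.2.1 - wh.2.1‖, sq_nonneg ‖u.2.2.2 - wh.2.2.2‖])
  have hc4 : ‖u.2.2.2 - wh.2.2.2‖ ≤ D := hDdef ▸ le_sqrt_of_sq_le' (norm_nonneg _)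
    (by nlinarith [sq_nonneg ‖u.1 - wh.1‖, sq_nonneg ‖u.2.1 - wh.2.1‖, sq_nonneg ‖u.2.2.1 - wh.2.2.1‖])
  -- the product (sup) norm is bounded by D
  have hsupD : ‖wh - u‖ ≤ D := by
    rw [Prod.norm_def, Prod.norm_def, Prod.norm_def]
    simp only [Prod.fst_sub, Prod.snd_sub]
    rw [norm_sub_rev, norm_sub_rev wh.2.1, norm_sub_rev wh.2.2.1, norm_sub_rev wh.2.2.2]
    exact max_le hc1 (max_le hc2 (max_le hc3 hc4))
  -- operator norm of restriction
  have hsub : ‖(Vh.subtypeL : Vh →L[ℝ] V)‖ ≤ 1 :=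
    ContinuousLinearMap.opNorm_le_bound _ zero_le_one (fun v => by
      simp [Submodule.subtypeL_apply])
  have hBcomp : ∀ w : X × Y × H × H, ‖(B w).comp Vh.subtypeL‖ ≤ ‖B‖ * ‖w‖ := fun w => by
    have h1 := ContinuousLinearMap.opNorm_comp_le (B w) (Vh.subtypeL)
    have h2 := B.le_opNorm w
    nlinarith [norm_nonneg (B w)]
  -- bound on J wh
  have hBwh : B wh - L = B (wh - u) := by rw [← hBu, map_sub]
  have h1 : ‖(B wh - L).comp Vh.subtypeL‖ ≤ ‖B‖ * D := by
    rw [hBwh]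
    exact (hBcomp _).trans (mul_le_mul_of_nonneg_left hsupD (norm_nonneg (B : _ →L[ℝ] _)))
  have hlip : ∀ (f : H → H) (Lf : NNReal), LipschitzWith Lf f → ∀ a b : X,
      ‖f (ι a) - f (ι b)‖ ≤ (Lf:ℝ) * CP' * ‖a - b‖ := by
    intro f Lf hf a b
    have h := hf.dist_le_mul (ι a) (ι b)
    rw [dist_eq_norm, dist_eq_norm] at h
    have h2 : ‖ι a - ι b‖ = ‖ι (a - b)‖ := by rw [map_sub]
    have h3 := hι' (a - b)
    have := Lf.coe_nonneg
    nlinarith [norm_nonneg (a - b)]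
  have h2 : ‖ρ (ι wh.1) - wh.2.2.1‖ ≤ ((Lρ:ℝ)*CP'+1) * D := by
    have ht := norm_sub_le_norm_sub_add_norm_sub (ρ (ι wh.1)) (ρ (ι u.1)) wh.2.2.1
    have hl := hlip ρ Lρ hρ wh.1 u.1
    have he : ‖ρ (ι u.1) - wh.2.2.1‖ = ‖u.2.2.1 - wh.2.2.1‖ := by rw [hq]
    rw [norm_sub_rev wh.1] at hl
    have hm := mul_le_mul_of_nonneg_left hc1 (mul_nonneg hLρ hCP')
    linarith [hc3]
  have h3 : ‖γ (ι wh.1) - wh.2.2.2‖ ≤ ((Lγ:ℝ)*CP'+1) * D := by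
    have ht := norm_sub_le_norm_sub_add_norm_sub (γ (ι wh.1)) (γ (ι u.1)) wh.2.2.2
    have hl := hlip γ Lγ hγ wh.1 u.1
    have he : ‖γ (ι u.1) - wh.2.2.2‖ = ‖u.2.2.2 - wh.2.2.2‖ := by rw [hr]
    rw [norm_sub_rev wh.1] at hl
    have hm := mul_le_mul_of_nonneg_left hc1 (mul_nonneg hLγ hCP')
    linarith [hc4]
  have hJwh : J wh ≤ (M * D)^2 := by
    rw [hJ wh, hMdef]
    have hp : (0:ℝ) ≤ (Lρ:ℝ)*CP'+1 := by positivity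
    have hg : (0:ℝ) ≤ (Lγ:ℝ)*CP'+1 := by positivity
    have key := sq3' (norm_nonneg ((B wh - L).comp Vh.subtypeL))
      (norm_nonneg (ρ (ι wh.1) - wh.2.2.1)) (norm_nonneg (γ (ι wh.1) - wh.2.2.2))
      (mul_nonneg (norm_nonneg (B : _ →L[ℝ] _)) hD0) (mul_nonneg hp hD0) (mul_nonneg hg hD0)
      h1 h2 h3
    exact key.trans (le_of_eq (by ring))
  -- from minimality, each residual of uh is bounded by M * D
  have hMD : 0 ≤ M * D := mul_nonneg hM hD0
  have hJuh := (hmin wh hwh).trans hJwh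
  rw [hJ uh] at hJuh
  have hA : ‖(B uh - L).comp Vh.subtypeL‖ ≤ M * D := by
    have := le_sqrt_of_sq_le' (norm_nonneg ((B uh - L).comp Vh.subtypeL))
      (show _ ≤ (M*D)^2 by linarith [sq_nonneg ‖ρ (ι uh.1) - uh.2.2.1‖, sq_nonneg ‖γ (ι uh.1) - uh.2.2.2‖])
    rwa [Real.sqrt_sq hMD] at this
  have hR : ‖ρ (ι uh.1) - uh.2.2.1‖ ≤ M * D := by
    have := le_sqrt_of_sq_le' (norm_nonneg (ρ (ι uh.1) - uh.2.2.1))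
      (show _ ≤ (M*D)^2 by linarith [sq_nonneg ‖(B uh - L).comp Vh.subtypeL‖, sq_nonneg ‖γ (ι uh.1) - uh.2.2.2‖])
    rwa [Real.sqrt_sq hMD] at this
  have hG : ‖γ (ι uh.1) - uh.2.2.2‖ ≤ M * D := by
    have := le_sqrt_of_sq_le' (norm_nonneg (γ (ι uh.1) - uh.2.2.2))
      (show _ ≤ (M*D)^2 by linarith [sq_nonneg ‖(B uh - L).comp Vh.subtypeL‖, sq_nonneg ‖ρ (ι uh.1) - uh.2.2.1‖])
    rwa [Real.sqrt_sq hMD] at this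
  -- stability applied to wh - uh
  have hst := hstab (wh - uh) (Uh.sub_mem hwh huh)
  simp only [Prod.fst_sub, Prod.snd_sub] at hst
  -- bound the stability RHS
  have hBsplit : (B (wh - uh)).comp Vh.subtypeL
      = (B (wh - u)).comp Vh.subtypeL - (B uh - L).comp Vh.subtypeL := by
    rw [← ContinuousLinearMap.sub_comp]
    congr 1
    rw [← hBu, map_sub, map_sub]
    abel
  have hB' : ‖(B (wh - uh)).comp Vh.subtypeL‖ ≤ ‖B‖ * D + M * D := by
    rw [hBsplit]
    have t1 : ‖(B (wh - u)).comp Vh.subtypeL‖ ≤ ‖B‖ * D :=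
      (hBcomp _).trans (mul_le_mul_of_nonneg_left hsupD (norm_nonneg (B : _ →L[ℝ] _)))
    exact (norm_sub_le ((B (wh - u)).comp Vh.subtypeL) ((B uh - L).comp Vh.subtypeL)).trans
      (add_le_add t1 hA)
  have h3' : ‖wh.2.2.1 - uh.2.2.1‖ ≤ D + ((Lρ:ℝ) * E + M * D) := by
    have ht := norm_sub_le_norm_sub_add_norm_sub wh.2.2.1 u.2.2.1 uh.2.2.1
    have ht2 := norm_sub_le_norm_sub_add_norm_sub u.2.2.1 (ρ (ι uh.1)) uh.2.2.1
    have hl : ‖u.2.2.1 - ρ (ι uh.1)‖ ≤ (Lρ:ℝ) * E := by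
      rw [hq]
      have h := hρ.dist_le_mul (ι u.1) (ι uh.1)
      rw [dist_eq_norm, dist_eq_norm] at h
      rw [show ‖ι u.1 - ι uh.1‖ = E by rw [hEdef, map_sub]] at h
      exact h
    rw [norm_sub_rev wh.2.2.1 u.2.2.1] at ht
    linarith [hc3]
  have h4' : ‖wh.2.2.2 - uh.2.2.2‖ ≤ D + ((Lγ:ℝ) * E + M * D) := by
    have ht := norm_sub_le_norm_sub_add_norm_sub wh.2.2.2 u.2.2.2 uh.2.2.2
    have ht2 := norm_sub_le_norm_sub_add_norm_sub u.2.2.2 (γ (ι uh.1)) uh.2.2.2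
    have hl : ‖u.2.2.2 - γ (ι uh.1)‖ ≤ (Lγ:ℝ) * E := by
      rw [hr]
      have h := hγ.dist_le_mul (ι u.1) (ι uh.1)
      rw [dist_eq_norm, dist_eq_norm] at h
      rw [show ‖ι u.1 - ι uh.1‖ = E by rw [hEdef, map_sub]] at h
      exact h
    rw [norm_sub_rev wh.2.2.2 u.2.2.2] at ht
    linarith [hc4]
  have hsum : ‖(B (wh - uh)).comp Vh.subtypeL‖ + ‖wh.2.2.1 - uh.2.2.1‖ + ‖wh.2.2.2 - uh.2.2.2‖
      ≤ (‖B‖ + 3*M + 2) * D + ((Lρ:ℝ)+(Lγ:ℝ)) * E := by ring_nf; linarith [hB', h3', h4']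
  have hstD : Real.sqrt (‖wh.1 - uh.1‖^2 + ‖wh.2.1 - uh.2.1‖^2
      + ‖wh.2.2.1 - uh.2.2.1‖^2 + ‖wh.2.2.2 - uh.2.2.2‖^2)
      ≤ Cs * ((‖B‖ + 3*M + 2) * D + ((Lρ:ℝ)+(Lγ:ℝ)) * E) :=
    hst.trans (mul_le_mul_of_nonneg_left hsum hCs.le)
  -- triangle inequality for the ℓ² quantity
  have htri : Real.sqrt (‖u.1 - uh.1‖^2 + ‖u.2.1 - uh.2.1‖^2
      + ‖u.2.2.1 - uh.2.2.1‖^2 + ‖u.2.2.2 - uh.2.2.2‖^2)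
      ≤ D + Real.sqrt (‖wh.1 - uh.1‖^2 + ‖wh.2.1 - uh.2.1‖^2
      + ‖wh.2.2.1 - uh.2.2.1‖^2 + ‖wh.2.2.2 - uh.2.2.2‖^2) := by
    rw [hDdef]
    have step1 : Real.sqrt (‖u.1 - uh.1‖^2 + ‖u.2.1 - uh.2.1‖^2
        + ‖u.2.2.1 - uh.2.2.1‖^2 + ‖u.2.2.2 - uh.2.2.2‖^2)
        ≤ Real.sqrt ((‖u.1 - wh.1‖ + ‖wh.1 - uh.1‖)^2 + (‖u.2.1 - wh.2.1‖ + ‖wh.2.1 - uh.2.1‖)^2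
          + (‖u.2.2.1 - wh.2.2.1‖ + ‖wh.2.2.1 - uh.2.2.1‖)^2
          + (‖u.2.2.2 - wh.2.2.2‖ + ‖wh.2.2.2 - uh.2.2.2‖)^2) := by
      apply mono4' <;> (rw [abs_norm]; exact norm_sub_le_norm_sub_add_norm_sub _ _ _)
    exact step1.trans (mink4' _ _ _ _ _ _ _ _)
  have hst0 : (0:ℝ) ≤ Real.sqrt (‖wh.1 - uh.1‖^2 + ‖wh.2.1 - uh.2.1‖^2
      + ‖wh.2.2.1 - uh.2.2.1‖^2 + ‖wh.2.2.2 - uh.2.2.2‖^2) := Real.sqrt_nonneg _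
  have ha : (0:ℝ) ≤ ‖B‖ + 3*M + 2 := by
    have := norm_nonneg (B : _ →L[ℝ] _); linarith
  have n1 : (0:ℝ) ≤ Cs * (((Lρ:ℝ)+(Lγ:ℝ)) * D) :=
    mul_nonneg hCs.le (mul_nonneg (by linarith) hD0)
  have n2 : (0:ℝ) ≤ Cs * ((‖B‖ + 3*M + 2) * E) := mul_nonneg hCs.le (mul_nonneg ha hE0)
  linarith [htri, hstD, n1, n2, hE0]
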